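/- arXiv:1812.06775 — 5 statements merged into one kernel-verified Lean document; each statement's English description precedes it below -/
import Mathlib

section
/- (Hadamard's inequality with equality condition.) Let M be a nonsingular real k×k matrix with column vectors c₁, …, c_k. Then ∏_{i=1}^k ‖c_i‖ ≥ |det M|, with equality if and only if the vectors c₁, …, c_k are pairwise orthogonal. -/
open Matrix
open scoped RealInnerProductSpace
open Module Finset

/-- **Hadamard's inequality with equality condition.** For a nonsingular real `k × k` matrix
`M` with columns `c₁, …, c_k`, one has `∏_i ‖c_i‖ ≥ |det M|`, with equality if and only if
the columns are pairwise orthogonal. -/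
theorem hadamard_inequality_with_equality
    (k : ℕ) (M : Matrix (Fin k) (Fin k) ℝ) (hM : M.det ≠ 0) :
    |M.det| ≤ ∏ i, ‖(WithLp.equiv 2 (Fin k → ℝ)).symm (fun r => M r i)‖ ∧
    ((∏ i, ‖(WithLp.equiv 2 (Fin k → ℝ)).symm (fun r => M r i)‖) = |M.det| ↔
      ∀ i j, i ≠ j →
        ⟪(WithLp.equiv 2 (Fin k → ℝ)).symm (fun r => M r i),
          (WithLp.equiv 2 (Fin k → ℝ)).symm (fun r => M r j)⟫ = 0) := by
  classical
  letI : WellFoundedLT (Fin k) := inferInstance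
  have hdim : finrank ℝ (EuclideanSpace ℝ (Fin k)) = Fintype.card (Fin k) := by simp
  set f : Fin k → EuclideanSpace ℝ (Fin k) :=
    fun i => (WithLp.equiv 2 (Fin k → ℝ)).symm (fun r => M r i) with hfdef
  set b : OrthonormalBasis (Fin k) ℝ (EuclideanSpace ℝ (Fin k)) :=
    EuclideanSpace.basisFun (Fin k) ℝ with hbdef
  have hdet : b.toBasis.det f = M.det := by
    rw [Basis.det_apply]
    congr 1
  set g := InnerProductSpace.gramSchmidtOrthonormalBasis hdim f with hgdef
  have hsplit : b.toBasis.det f = b.toBasis.det g.toBasis * g.toBasis.det f := by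
    rw [Basis.det_apply, Basis.det_apply, Basis.det_apply, ← Matrix.det_mul,
      Basis.toMatrix_mul_toMatrix]
  have hgs := InnerProductSpace.gramSchmidtOrthonormalBasis_det (𝕜 := ℝ) hdim f
  rw [← hgdef] at hgs
  have habs : |M.det| = ∏ i, |⟪g i, f i⟫| := by
    have h1 : |b.toBasis.det (g.toBasis : Fin k → EuclideanSpace ℝ (Fin k))| = 1 := by
      rw [g.coe_toBasis]
      rcases b.det_to_matrix_orthonormalBasis_real g with h | h <;> rw [h] <;> norm_num
    rw [← hdet, hsplit, abs_mul, hgs, Finset.abs_prod, h1, one_mul]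
  have hinner_ne : ∀ i, ⟪g i, f i⟫ ≠ 0 := by
    intro i
    have hne : (∏ i, |⟪g i, f i⟫|) ≠ 0 := by rw [← habs]; exact abs_ne_zero.2 hM
    intro h0
    exact hne (Finset.prod_eq_zero (Finset.mem_univ i) (by simp [h0]))
  have hfne : ∀ i, f i ≠ 0 := by
    intro i h0
    exact hinner_ne i (by rw [h0, inner_zero_right])
  have hgnorm : ∀ i, ‖(g : Fin k → EuclideanSpace ℝ (Fin k)) i‖ = 1 := fun i =>
    g.orthonormal.1 i
  have hCS : ∀ i, |⟪g i, f i⟫| ≤ ‖f i‖ := by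
    intro i
    have := abs_real_inner_le_norm ((g : Fin k → EuclideanSpace ℝ (Fin k)) i) (f i)
    rwa [hgnorm i, one_mul] at this
  have hle : |M.det| ≤ ∏ i, ‖f i‖ := by
    rw [habs]
    exact Finset.prod_le_prod (fun i _ => abs_nonneg _) (fun i _ => hCS i)
  refine ⟨hle, ?_, ?_⟩
  · -- equality → orthogonal
    intro heq i j hij
    have hall : ∀ i, |⟪g i, f i⟫| = ‖f i‖ := by
      by_contra hc
      push_neg at hc
      obtain ⟨i0, hi0⟩ := hc
      have hlt : (∏ i, |⟪g i, f i⟫|) < ∏ i, ‖f i‖ :=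
        Finset.prod_lt_prod (fun i _ => abs_pos.2 (hinner_ne i))
          (fun i _ => hCS i) ⟨i0, Finset.mem_univ i0, lt_of_le_of_ne (hCS i0) hi0⟩
      rw [← habs, heq] at hlt
      exact lt_irrefl _ hlt
    have hmul : ∀ i, ∃ c : ℝ, f i = c • (g : Fin k → EuclideanSpace ℝ (Fin k)) i := by
      intro i
      rcases abs_cases ⟪g i, f i⟫ with ⟨h1, _⟩ | ⟨h1, _⟩
      · refine ⟨‖f i‖, ?_⟩
        have h3 : ⟪(g : Fin k → EuclideanSpace ℝ (Fin k)) i, f i⟫ =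
            ‖(g : Fin k → EuclideanSpace ℝ (Fin k)) i‖ * ‖f i‖ := by
          rw [hgnorm i, one_mul, ← hall i]
          exact h1.symm
        have h2 := inner_eq_norm_mul_iff_real.1 h3
        rw [hgnorm i, one_smul] at h2
        exact h2.symm
      · refine ⟨-‖f i‖, ?_⟩
        have h3 : ⟪-((g : Fin k → EuclideanSpace ℝ (Fin k)) i), f i⟫ =
            ‖-((g : Fin k → EuclideanSpace ℝ (Fin k)) i)‖ * ‖f i‖ := by
          rw [inner_neg_left, norm_neg, hgnorm i, one_mul, ← hall i, h1]
        have h2 := inner_eq_norm_mul_iff_real.1 h3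
        rw [norm_neg, hgnorm i, one_smul, smul_neg] at h2
        rw [neg_smul]
        exact h2.symm
    obtain ⟨ci, hci⟩ := hmul i
    obtain ⟨cj, hcj⟩ := hmul j
    show ⟪f i, f j⟫ = 0
    rw [hci, hcj, real_inner_smul_left, real_inner_smul_right,
      g.orthonormal.2 hij, mul_zero, mul_zero]
  · -- orthogonal → equality
    intro horth
    have hpair : Pairwise fun i j => ⟪f i, f j⟫ = 0 := fun i j hij => horth i j hij
    have hg : ∀ i, (g : Fin k → EuclideanSpace ℝ (Fin k)) i = (‖f i‖⁻¹ : ℝ) • f i := fun i =>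
      InnerProductSpace.gramSchmidtOrthonormalBasis_apply_of_orthogonal hdim hpair (hfne i)
    have hinner : ∀ i, ⟪g i, f i⟫ = ‖f i‖ := by
      intro i
      rw [hg i, real_inner_smul_left, real_inner_self_eq_norm_sq]
      field_simp [norm_ne_zero_iff.2 (hfne i)]
    rw [habs]
    exact Finset.prod_congr rfl fun i _ => by rw [hinner i, abs_of_nonneg (norm_nonneg _)]
end

section
/- (Axes-preserving linear mappings.) Let M be a real n×d matrix with d < n such that the Gram matrix MᵀM has d distinct nonzero eigenvalues (equivalently, M has d distinct nonzero singular values). Then the following are equivalent: (a) the columns of M are pairwise orthogonal; (b) for every factorization M = U Σ Vᵀ in which U is an n×n orthogonal matrix, V is a d×d orthogonal matrix, and Σ is the n×d matrix given by Σ_{ij} = s_j if i = j and 0 otherwise for some nonnegative reals s₁, …, s_d, the matrix of absolute values |V| (with entries |V_{ij}|) is a permutation matrix. -/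
open Matrix
open scoped RealInnerProductSpace

/-- A square real matrix is a permutation matrix if it is a 0–1 matrix with exactly one `1`
in every row and every column, i.e. it is the matrix of some permutation. -/
def IsPermutationMatrix {d : ℕ} (P : Matrix (Fin d) (Fin d) ℝ) : Prop :=
  ∃ σ : Equiv.Perm (Fin d), ∀ i j, P i j = if σ i = j then 1 else 0

lemma core_perm {d : ℕ} (W : Matrix (Fin d) (Fin d) ℝ) (hW : W * Wᵀ = 1)
    (g μ : Fin d → ℝ) (hμ : Function.Injective μ)
    (hcomm : ∀ i j, g i * W i j = W i j * μ j) :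
    ∃ σ : Equiv.Perm (Fin d), (∀ i j, |W i j| = if σ i = j then 1 else 0) ∧
      ∀ i, g i = μ (σ i) := by
  have hrow : ∀ i i', ∑ k, W i k * W i' k = if i = i' then 1 else 0 := by
    intro i i'
    have := congrFun (congrFun hW i) i'
    simpa [Matrix.mul_apply, Matrix.one_apply, Matrix.transpose_apply] using this
  have heig : ∀ i j, W i j ≠ 0 → g i = μ j := by
    intro i j hj
    have h := hcomm i j
    have h2 : (g i - μ j) * W i j = 0 := by ring_nf; linarith [h]
    rcases mul_eq_zero.1 h2 with h1 | h1
    · linarith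
    · exact absurd h1 hj
  have hex : ∀ i, ∃ j, W i j ≠ 0 := by
    intro i
    by_contra hc
    push_neg at hc
    have := hrow i i
    simp [hc] at this
  choose f hf using hex
  have hval : ∀ i, g i = μ (f i) := fun i => heig i (f i) (hf i)
  have huniq : ∀ i j, j ≠ f i → W i j = 0 := by
    intro i j hj
    by_contra hc
    exact hj (hμ ((heig i j hc).symm.trans (hval i)))
  have hsum : ∀ i i', ∑ k, W i k * W i' k = W i (f i) * W i' (f i) := by
    intro i i'
    apply Finset.sum_eq_single
    · intro k _ hk
      rw [huniq i k hk, zero_mul]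
    · intro h; exact absurd (Finset.mem_univ _) h
  have hone : ∀ i, |W i (f i)| = 1 := by
    intro i
    have h := hrow i i
    rw [if_pos rfl, hsum i i] at h
    rcases mul_self_eq_one_iff.mp h with h1 | h1 <;> rw [h1] <;> norm_num
  have hinj : Function.Injective f := by
    intro i i' h
    by_contra hne
    have h0 := hrow i i'
    rw [if_neg hne, hsum i i', h] at h0
    exact (mul_ne_zero (h ▸ hf i) (hf i')) h0
  let σ : Equiv.Perm (Fin d) := Equiv.ofBijective f (Finite.injective_iff_bijective.mp hinj)
  refine ⟨σ, fun i j => ?_, hval⟩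
  by_cases hj : f i = j
  · subst hj; simpa [σ] using hone i
  · have hj' : σ i ≠ j := hj
    rw [if_neg hj', huniq i j (fun h => hj h.symm), abs_zero]

/-- **Axes-preserving linear mappings.** Let `M` be a real `n × d` matrix with `d < n` whose
Gram matrix `MᵀM` has `d` distinct nonzero eigenvalues (equivalently, `M` has `d` distinct
nonzero singular values). Then the columns of `M` are pairwise orthogonal if and only if in
every singular value decomposition `M = U Σ Vᵀ` (with `U`, `V` orthogonal and `Σ` the `n × d`
matrix with nonnegative entries `s_j` on the main diagonal and `0` elsewhere), the matrix of
absolute values `|V|` is a permutation matrix. -/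
theorem axes_preserving_iff_abs_svd_factor_perm
    (n d : ℕ) (hdn : d < n) (M : Matrix (Fin n) (Fin d) ℝ)
    (hH : (Mᵀ * M).IsHermitian)
    (hdist : Function.Injective hH.eigenvalues)
    (hnz : ∀ j, hH.eigenvalues j ≠ 0) :
    (∀ i j, i ≠ j →
        ⟪(WithLp.equiv 2 (Fin n → ℝ)).symm (fun r => M r i),
          (WithLp.equiv 2 (Fin n → ℝ)).symm (fun r => M r j)⟫ = 0) ↔
      (∀ (U : Matrix (Fin n) (Fin n) ℝ) (V : Matrix (Fin d) (Fin d) ℝ) (s : Fin d → ℝ),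
        Uᵀ * U = 1 → Vᵀ * V = 1 → (∀ j, 0 ≤ s j) →
        M = U * (Matrix.of fun (i : Fin n) (j : Fin d) =>
          if (i : ℕ) = (j : ℕ) then s j else 0) * Vᵀ →
        IsPermutationMatrix (V.map fun x => |x|)) := by
  have hinner : ∀ i j,
      ⟪(WithLp.equiv 2 (Fin n → ℝ)).symm (fun r => M r i),
        (WithLp.equiv 2 (Fin n → ℝ)).symm (fun r => M r j)⟫ = (Mᵀ * M) i j := by
    intro i j
    simp [PiLp.inner_apply, Matrix.mul_apply, Matrix.transpose_apply]
    exact Finset.sum_congr rfl fun _ _ => mul_comm _ _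
  obtain ⟨W, lam, hlinj, hlpos, hWtW, hWWt, hspec⟩ :
      ∃ (W : Matrix (Fin d) (Fin d) ℝ) (lam : Fin d → ℝ),
        Function.Injective lam ∧ (∀ k, 0 < lam k) ∧ Wᵀ * W = 1 ∧ W * Wᵀ = 1 ∧
          Mᵀ * M = W * Matrix.diagonal lam * Wᵀ := by
    have hpsd : (Mᵀ * M).PosSemidef := by
      have := Matrix.posSemidef_conjTranspose_mul_self M
      rwa [Matrix.conjTranspose_eq_transpose_of_trivial] at this
    refine ⟨(hH.eigenvectorUnitary : Matrix (Fin d) (Fin d) ℝ), hH.eigenvalues,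
      hdist, ?_, ?_, ?_, ?_⟩
    · intro k
      exact lt_of_le_of_ne (hpsd.eigenvalues_nonneg k) (Ne.symm (hnz k))
    · have := Matrix.mem_unitaryGroup_iff'.mp hH.eigenvectorUnitary.2
      rwa [Matrix.star_eq_conjTranspose, Matrix.conjTranspose_eq_transpose_of_trivial] at this
    · have := Matrix.mem_unitaryGroup_iff.mp hH.eigenvectorUnitary.2
      rwa [Matrix.star_eq_conjTranspose, Matrix.conjTranspose_eq_transpose_of_trivial] at this
    · have := hH.spectral_theorem
      rwa [Unitary.conjStarAlgAut_apply, Matrix.star_eq_conjTranspose, Matrix.conjTranspose_eq_transpose_of_trivial] at this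
  have hGWmat : (Mᵀ * M) * W = W * Matrix.diagonal lam := by
    rw [hspec, Matrix.mul_assoc (W * Matrix.diagonal lam) Wᵀ W, hWtW, Matrix.mul_one]
  constructor
  · -- forward direction
    intro horth U V s hU hV hs hM
    have hGoff : ∀ i j, i ≠ j → (Mᵀ * M) i j = 0 :=
      fun i j hij => (hinner i j).symm.trans (horth i j hij)
    have hdiagG : Mᵀ * M = Matrix.diagonal (fun i => (Mᵀ * M) i i) := by
      ext i j
      by_cases hij : i = j
      · subst hij; simp [Matrix.diagonal_apply_eq]
      · rw [Matrix.diagonal_apply_ne _ hij]; exact hGoff i j hij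
    have hcomm1 : ∀ i j, (Mᵀ * M) i i * W i j = W i j * lam j := by
      intro i j
      have h0 := congrFun (congrFun hGWmat i) j
      rw [hdiagG] at h0
      simpa [Matrix.diagonal_mul, Matrix.mul_diagonal] using h0
    obtain ⟨σ0, -, hgval⟩ := core_perm W hWWt (fun i => (Mᵀ * M) i i) lam hlinj hcomm1
    have ginj : Function.Injective (fun i => (Mᵀ * M) i i) := by
      intro a b hab
      have : lam (σ0 a) = lam (σ0 b) := by
        rw [← hgval a, ← hgval b]; exact hab
      exact σ0.injective (hlinj this)
    -- compute MᵀM through the given SVD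
    set S : Matrix (Fin n) (Fin d) ℝ :=
      Matrix.of fun (i : Fin n) (j : Fin d) => if (i : ℕ) = (j : ℕ) then s j else 0 with hSdef
    have hStS : Sᵀ * S = Matrix.diagonal (fun j => s j ^ 2) := by
      ext j j'
      rw [Matrix.mul_apply]
      rw [Finset.sum_eq_single (Fin.castLE hdn.le j)]
      · by_cases h : j = j'
        · subst h
          simp [hSdef, Matrix.diagonal_apply_eq, sq]
        · have hne : (j : ℕ) ≠ (j' : ℕ) := fun hc => h (Fin.ext hc)
          rw [Matrix.diagonal_apply_ne _ h]
          simp [hSdef, hne]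
      · intro k _ hk
        have hk' : ((k : Fin n) : ℕ) ≠ (j : ℕ) := by
          intro hc
          exact hk (Fin.ext (by simpa using hc))
        simp [hSdef, Matrix.transpose_apply, hk']
      · intro h; exact absurd (Finset.mem_univ _) h
    have hG2 : Mᵀ * M = V * Matrix.diagonal (fun j => s j ^ 2) * Vᵀ := by
      rw [hM]
      simp only [Matrix.transpose_mul, Matrix.transpose_transpose, Matrix.mul_assoc]
      rw [← Matrix.mul_assoc Uᵀ U, hU, Matrix.one_mul, ← Matrix.mul_assoc Sᵀ S, hStS]
    have hGV : (Mᵀ * M) * V = V * Matrix.diagonal (fun j => s j ^ 2) := by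
      rw [hG2, Matrix.mul_assoc (V * Matrix.diagonal fun j => s j ^ 2) Vᵀ V, hV,
        Matrix.mul_one]
    have hcomm2 : ∀ i j, s i ^ 2 * Vᵀ i j = Vᵀ i j * (Mᵀ * M) j j := by
      intro i j
      have h0 := congrFun (congrFun hGV j) i
      rw [hdiagG] at h0
      simp only [Matrix.diagonal_mul, Matrix.mul_diagonal] at h0
      rw [Matrix.transpose_apply]
      linarith [h0]
    have hVtV : Vᵀ * Vᵀᵀ = 1 := by rwa [Matrix.transpose_transpose]
    obtain ⟨σ, hσ, -⟩ := core_perm Vᵀ hVtV (fun i => s i ^ 2) (fun i => (Mᵀ * M) i i)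
      ginj hcomm2
    refine ⟨σ.symm, fun i j => ?_⟩
    rw [Matrix.map_apply]
    have h1 := hσ j i
    rw [Matrix.transpose_apply] at h1
    rw [h1]
    by_cases hc : σ j = i
    · rw [if_pos hc, if_pos (by rw [← hc, Equiv.symm_apply_apply])]
    · rw [if_neg hc, if_neg (fun hcc => hc (by rw [← hcc, Equiv.apply_symm_apply]))]
  · -- reverse direction
    intro h i j hij
    set s : Fin d → ℝ := fun k => Real.sqrt (lam k) with hsdef
    have hs0 : ∀ k, 0 < s k := fun k => Real.sqrt_pos.mpr (hlpos k)
    have hs2 : ∀ k, s k * s k = lam k := fun k => Real.mul_self_sqrt (hlpos k).le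
    set c : Fin d → (Fin n → ℝ) := fun k => M *ᵥ (fun r => W r k) with hcdef
    have hkey : ∀ x y : Fin d → ℝ, (M *ᵥ x) ⬝ᵥ (M *ᵥ y) = ((Mᵀ * M) *ᵥ x) ⬝ᵥ y := by
      intro x y
      rw [Matrix.dotProduct_mulVec, ← Matrix.mulVec_transpose, Matrix.mulVec_mulVec]
    have hWc : ∀ a b : Fin d, (fun r => W r a) ⬝ᵥ (fun r => W r b) = if a = b then 1 else 0 := by
      intro a b
      have := congrFun (congrFun hWtW a) b
      simpa [Matrix.mul_apply, Matrix.transpose_apply, Matrix.one_apply, dotProduct] using this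
    have hGva : ∀ a, (Mᵀ * M) *ᵥ (fun r => W r a) = fun i => lam a * W i a := by
      intro a
      funext r
      have h1 : ((Mᵀ * M) *ᵥ fun r' => W r' a) r = ((Mᵀ * M) * W) r a := by
        simp [Matrix.mulVec, Matrix.mul_apply, dotProduct]
      rw [h1, hGWmat, Matrix.mul_diagonal]
      ring
    have hc : ∀ a b, c a ⬝ᵥ c b = if a = b then lam a else 0 := by
      intro a b
      rw [hcdef]
      rw [hkey, hGva]
      have h2 : (fun r => lam a * W r a) ⬝ᵥ (fun r => W r b)
          = lam a * ((fun r => W r a) ⬝ᵥ (fun r => W r b)) := by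
        rw [dotProduct, dotProduct, Finset.mul_sum]
        exact Finset.sum_congr rfl fun r _ => by ring
      rw [h2, hWc a b]
      by_cases hab : a = b
      · subst hab; simp
      · simp [hab]
    set u : Fin d → EuclideanSpace ℝ (Fin n) :=
      fun k => (WithLp.equiv 2 (Fin n → ℝ)).symm ((s k)⁻¹ • c k) with hudef
    have hu : ∀ a b, (inner ℝ (u a) (u b) : ℝ) = if a = b then 1 else 0 := by
      intro a b
      have h1 : (inner ℝ (u a) (u b) : ℝ) = ∑ r, ((s a)⁻¹ * c a r) * ((s b)⁻¹ * c b r) := by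
        simp [hudef, PiLp.inner_apply]
        exact Finset.sum_congr rfl fun _ _ => mul_comm _ _
      have h2 : ∑ r, ((s a)⁻¹ * c a r) * ((s b)⁻¹ * c b r)
          = (s a)⁻¹ * (s b)⁻¹ * (c a ⬝ᵥ c b) := by
        rw [dotProduct, Finset.mul_sum]
        exact Finset.sum_congr rfl fun r _ => by ring
      rw [h1, h2, hc a b]
      by_cases hab : a = b
      · subst hab
        rw [if_pos rfl, if_pos rfl, ← hs2 a]
        have := (hs0 a).ne'
        field_simp
      · simp [hab]
    set sset : Set (Fin n) := {i : Fin n | (i : ℕ) < d} with hsset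
    set v : Fin n → EuclideanSpace ℝ (Fin n) :=
      fun i => if hi : (i : ℕ) < d then u ⟨(i : ℕ), hi⟩ else 0 with hvdef
    have hvnorm : Orthonormal ℝ (sset.restrict v) := by
      rw [orthonormal_iff_ite]
      intro x y
      have hx : ((x : Fin n) : ℕ) < d := x.2
      have hy : ((y : Fin n) : ℕ) < d := y.2
      have hres : (inner ℝ (sset.restrict v x) (sset.restrict v y) : ℝ)
          = inner ℝ (u ⟨((x : Fin n) : ℕ), hx⟩) (u ⟨((y : Fin n) : ℕ), hy⟩) := by
        simp only [Set.restrict_apply, hvdef, dif_pos hx, dif_pos hy]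
        exact congrArg₂ (inner ℝ) (dif_pos hx) (dif_pos hy)
      rw [hres, hu]
      by_cases hxy : x = y
      · subst hxy; simp
      · have hne : (⟨((x : Fin n) : ℕ), hx⟩ : Fin d) ≠ ⟨((y : Fin n) : ℕ), hy⟩ := by
          intro hcc
          apply hxy
          apply Subtype.ext
          apply Fin.ext
          simpa using congrArg Fin.val hcc
        rw [if_neg hne, if_neg hxy]
    obtain ⟨b, hb⟩ := hvnorm.exists_orthonormalBasis_extension_of_card_eq (by simp)
    set U : Matrix (Fin n) (Fin n) ℝ := Matrix.of fun i k => b k i with hUdef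
    have hU : Uᵀ * U = 1 := by
      have hbo := b.orthonormal
      rw [orthonormal_iff_ite] at hbo
      ext k k'
      have := hbo k k'
      simpa [hUdef, Matrix.mul_apply, Matrix.transpose_apply, Matrix.one_apply,
        PiLp.inner_apply, mul_comm] using this
    set S : Matrix (Fin n) (Fin d) ℝ :=
      Matrix.of fun (i : Fin n) (j : Fin d) => if (i : ℕ) = (j : ℕ) then s j else 0 with hSdef
    have hMW : M * W = U * S := by
      ext r k
      have hUS : (U * S) r k = U r (Fin.castLE hdn.le k) * s k := by
        rw [Matrix.mul_apply]
        rw [Finset.sum_eq_single (Fin.castLE hdn.le k)]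
        · simp [hSdef]
        · intro p _ hp
          have hp' : ((p : Fin n) : ℕ) ≠ (k : ℕ) := by
            intro hcc; exact hp (Fin.ext (by simpa using hcc))
          simp [hSdef, hp']
        · intro hmem; exact absurd (Finset.mem_univ _) hmem
      have hmem : (Fin.castLE hdn.le k) ∈ sset := by
        simpa [hsset] using k.2
      have hbk : b (Fin.castLE hdn.le k) = u k := by
        rw [hb _ hmem]
        simp only [hvdef]
        have hlt : ((Fin.castLE hdn.le k : Fin n) : ℕ) < d := by simpa using k.2
        rw [dif_pos hlt]
        have hfin : (⟨((Fin.castLE hdn.le k : Fin n) : ℕ), hlt⟩ : Fin d) = k :=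
          Fin.ext (by simp)
        rw [hfin]
      have hUk : U r (Fin.castLE hdn.le k) = (s k)⁻¹ * c k r := by
        rw [hUdef]
        show b (Fin.castLE hdn.le k) r = (s k)⁻¹ * c k r
        rw [hbk]
        rfl
      rw [hUS, hUk, Matrix.mul_apply]
      have hck : ∑ p, M r p * W p k = c k r := by
        rw [hcdef]; rfl
      rw [hck, mul_comm ((s k)⁻¹) (c k r), mul_assoc, inv_mul_cancel₀ (hs0 k).ne', mul_one]
    have hMfact : M = U * S * Wᵀ :=
      calc M = M * (W * Wᵀ) := by rw [hWWt, Matrix.mul_one]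
        _ = (M * W) * Wᵀ := by rw [Matrix.mul_assoc]
        _ = U * S * Wᵀ := by rw [hMW]
    rw [hSdef] at hMfact
    obtain ⟨σ, hσ⟩ := h U W s hU hWtW (fun k => Real.sqrt_nonneg _) hMfact
    rw [hinner i j, hspec, Matrix.mul_apply]
    apply Finset.sum_eq_zero
    intro k _
    rw [Matrix.transpose_apply, Matrix.mul_diagonal]
    by_cases hk : σ i = k
    · have hjk : σ j ≠ k := fun hcc => hij (σ.injective (hcc.trans hk.symm)).symm
      have hz := hσ j k
      rw [Matrix.map_apply, if_neg hjk] at hz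
      rw [abs_eq_zero.mp hz, mul_zero]
    · have hz := hσ i k
      rw [Matrix.map_apply, if_neg hk] at hz
      rw [abs_eq_zero.mp hz, zero_mul, zero_mul]
end

section
/- (Main theorem, global lower bound — part (b), inequality.) Let n, d, N be positive naturals with d ≤ n. For i = 1, …, N let M_i be a real n×d matrix with rank M_i = d, let V_i be a d×d orthogonal matrix, and let σ_{ij} > 0 for j = 1, …, d, subject to the constraint Σ_{i=1}^N Σ_{j=1}^d (−log σ_{ij}²) = C. Denote by c_{ij} the j-th column of the matrix M_i V_iᵀ. Then Σ_{i=1}^N log( Σ_{j=1}^d ‖c_{ij}‖² σ_{ij}² ) ≥ N·log d − C/d + (1/d) Σ_{i=1}^N log det(M_iᵀ M_i). -/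
open Matrix

lemma my_trace_eq_sum_eigenvalues {d : ℕ} {B : Matrix (Fin d) (Fin d) ℝ}
    (hB : B.IsHermitian) : B.trace = ∑ i, hB.eigenvalues i := by
  nth_rw 1 [hB.spectral_theorem]
  rw [Unitary.conjStarAlgAut_apply, Matrix.trace_mul_cycle, Unitary.coe_star_mul_self, Matrix.one_mul]
  simp [Matrix.trace_diagonal]

lemma my_geom_le_one {d : ℕ} (hd : 0 < d) (lam : Fin d → ℝ) (hnn : ∀ i, 0 ≤ lam i)
    (hsum : ∑ i, lam i = d) : ∏ i, lam i ≤ 1 := by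
  have hgm := Real.geom_mean_le_arith_mean_weighted Finset.univ (fun _ => 1/(d:ℝ)) lam
    (fun i _ => by positivity)
    (by simp [Finset.sum_const, mul_comm]
        field_simp)
    (fun i _ => hnn i)
  have h1 : ∑ i, (1/(d:ℝ)) * lam i = 1 := by
    rw [← Finset.mul_sum, hsum]
    field_simp
  rw [h1] at hgm
  have h2 : ∏ i, lam i = (∏ i, lam i ^ (1/(d:ℝ))) ^ (d:ℕ) := by
    rw [← Finset.prod_pow]
    refine Finset.prod_congr rfl fun i _ => ?_
    rw [← Real.rpow_natCast (lam i ^ (1/(d:ℝ))) d, ← Real.rpow_mul (hnn i)]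
    rw [one_div, inv_mul_cancel₀ (by exact_mod_cast hd.ne'), Real.rpow_one]
  rw [h2]
  calc (∏ i, lam i ^ (1/(d:ℝ))) ^ (d:ℕ) ≤ 1 ^ (d:ℕ) := by
        apply pow_le_pow_left₀ (Finset.prod_nonneg fun i _ => Real.rpow_nonneg (hnn i) _) hgm
    _ = 1 := one_pow _

lemma my_hadamard {d : ℕ} (hd : 0 < d) {B : Matrix (Fin d) (Fin d) ℝ} (hB : B.PosSemidef)
    (hdiag : ∀ j, 0 < B j j) : B.det ≤ ∏ j, B j j := by
  set g : Fin d → ℝ := fun j => Real.sqrt (B j j)⁻¹ with hg_def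
  have hg : ∀ j, 0 < g j := fun j => Real.sqrt_pos.2 (inv_pos.2 (hdiag j))
  have hgg : ∀ j, g j * g j = (B j j)⁻¹ := fun j =>
    Real.mul_self_sqrt (inv_nonneg.2 (hdiag j).le)
  set D : Matrix (Fin d) (Fin d) ℝ := Matrix.diagonal g with hD_def
  have hC : (Dᴴ * B * D).PosSemidef := hB.conjTranspose_mul_mul_same D
  have hDH : Dᴴ = D := by
    simp [hD_def, Matrix.diagonal_conjTranspose]
  have hdiagC : ∀ j, (Dᴴ * B * D) j j = 1 := by
    intro j
    rw [hDH]
    simp [hD_def, Matrix.mul_apply, Matrix.diagonal, Finset.sum_ite_eq, Finset.sum_ite_eq']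
    rw [mul_comm (g j) (B j j), mul_assoc, hgg j, mul_inv_cancel₀ (hdiag j).ne']
  have htr : (Dᴴ * B * D).trace = d := by
    rw [Matrix.trace]
    simp only [Matrix.diag_apply]
    rw [Finset.sum_congr rfl fun j _ => hdiagC j]
    simp
  have hsum : ∑ i, hC.isHermitian.eigenvalues i = d := by
    rw [← my_trace_eq_sum_eigenvalues hC.isHermitian, htr]
  have hdet1 : (Dᴴ * B * D).det ≤ 1 := by
    have := hC.isHermitian.det_eq_prod_eigenvalues
    rw [this]
    exact_mod_cast my_geom_le_one hd _ (fun i => hC.eigenvalues_nonneg i) hsum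
  have hdetD : D.det = ∏ j, g j := by simp [hD_def]
  have hdetC : (Dᴴ * B * D).det = (∏ j, g j) * B.det * (∏ j, g j) := by
    rw [Matrix.det_mul, Matrix.det_mul, hDH, hdetD]
  rw [hdetC] at hdet1
  have hprodpos : 0 < ∏ j, g j := Finset.prod_pos fun j _ => hg j
  have key : B.det ≤ ((∏ j, g j) * (∏ j, g j))⁻¹ := by
    have hpp : (0:ℝ) < (∏ j, g j) * (∏ j, g j) := by positivity
    calc B.det = ((∏ j, g j) * B.det * (∏ j, g j)) * ((∏ j, g j) * (∏ j, g j))⁻¹ := by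
          field_simp
      _ ≤ 1 * ((∏ j, g j) * (∏ j, g j))⁻¹ :=
          mul_le_mul_of_nonneg_right hdet1 (inv_nonneg.2 hpp.le)
      _ = ((∏ j, g j) * (∏ j, g j))⁻¹ := one_mul _
  calc B.det ≤ ((∏ j, g j) * (∏ j, g j))⁻¹ := key
    _ = ∏ j, B j j := by
        rw [← Finset.prod_mul_distrib]
        rw [← Finset.prod_inv_distrib]
        refine Finset.prod_congr rfl fun j _ => ?_
        rw [hgg j, inv_inv]

lemma my_det_pos {d : ℕ} {B : Matrix (Fin d) (Fin d) ℝ} (hB : B.PosSemidef)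
    (hr : B.rank = d) : 0 < B.det := by
  have hH := hB.isHermitian
  have hpos : ∀ i, 0 < hH.eigenvalues i := by
    intro i
    rcases (hB.eigenvalues_nonneg i).lt_or_eq with h | h
    · exact h
    · exfalso
      have hcard := hH.rank_eq_card_non_zero_eigs
      rw [hr] at hcard
      have hlt : Fintype.card {j // hH.eigenvalues j ≠ 0} < Fintype.card (Fin d) :=
        Fintype.card_subtype_lt (x := i) (by simp [← h])
      rw [Fintype.card_fin] at hlt
      omega
  have h2 := hH.det_eq_prod_eigenvalues
  rw [RCLike.ofReal_real_eq_id] at h2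
  simp only [id] at h2
  rw [h2]
  exact Finset.prod_pos fun i _ => hpos i

lemma my_key {d : ℕ} (hd : 0 < d) (x : Fin d → ℝ) (hx : ∀ j, 0 < x j) :
    Real.log d + (1/(d:ℝ)) * ∑ j, Real.log (x j) ≤ Real.log (∑ j, x j) := by
  have hdR : (0:ℝ) < d := by exact_mod_cast hd
  have hgm := Real.geom_mean_le_arith_mean_weighted Finset.univ (fun _ => 1/(d:ℝ)) x
    (fun i _ => by positivity)
    (by simp [Finset.sum_const]; field_simp)
    (fun i _ => (hx i).le)
  have hprodpos : 0 < ∏ j, x j ^ (1/(d:ℝ)) :=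
    Finset.prod_pos fun j _ => Real.rpow_pos_of_pos (hx j) _
  have hsumpos : 0 < ∑ j, x j := Finset.sum_pos (fun j _ => hx j) ⟨⟨0, hd⟩, Finset.mem_univ _⟩
  have h1 : ∑ i, (1/(d:ℝ)) * x i = (1/(d:ℝ)) * ∑ i, x i := by rw [Finset.mul_sum]
  rw [h1] at hgm
  have hlog := Real.log_le_log hprodpos hgm
  rw [Real.log_prod (fun j _ => (Real.rpow_pos_of_pos (hx j) _).ne'),
    Real.log_mul (by positivity) hsumpos.ne', Real.log_div one_ne_zero hdR.ne',
    Real.log_one] at hlog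
  have h2 : ∀ j ∈ Finset.univ, Real.log (x j ^ (1/(d:ℝ))) = (1/(d:ℝ)) * Real.log (x j) :=
    fun j _ => Real.log_rpow (hx j) _
  rw [Finset.sum_congr rfl h2, ← Finset.mul_sum] at hlog
  linarith


/-- **Main theorem, part (b): global lower bound.** For matrices `M_i` of rank `d`,
orthogonal `V_i`, and positive `σ_{ij}` subject to `∑_{i,j} (−log σ_{ij}²) = C`, letting
`c_{ij}` denote the `j`-th column of `M_i V_iᵀ`,
`∑_i log (∑_j ‖c_{ij}‖² σ_{ij}²) ≥ N log d − C/d + (1/d) ∑_i log det (M_iᵀ M_i)`. -/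
theorem vae_global_lower_bound
    (n d N : ℕ) (hn : 0 < n) (hd : 0 < d) (hN : 0 < N) (hdn : d ≤ n)
    (M : Fin N → Matrix (Fin n) (Fin d) ℝ) (hrank : ∀ i, (M i).rank = d)
    (V : Fin N → Matrix (Fin d) (Fin d) ℝ) (hV : ∀ i, (V i)ᵀ * V i = 1)
    (σ : Fin N → Fin d → ℝ) (hσ : ∀ i j, 0 < σ i j)
    (C : ℝ) (hC : (∑ i, ∑ j, (-Real.log ((σ i j) ^ 2))) = C) :
    (N : ℝ) * Real.log d - C / d +
        (1 / d : ℝ) * ∑ i, Real.log ((M i)ᵀ * M i).det ≤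
      ∑ i, Real.log (∑ j,
        ‖(WithLp.equiv 2 (Fin n → ℝ)).symm (fun r => (M i * (V i)ᵀ) r j)‖ ^ 2 *
          (σ i j) ^ 2) := by
  have hdR : (0:ℝ) < d := by exact_mod_cast hd
  have key : ∀ i : Fin N,
      Real.log d + (1/(d:ℝ)) * ∑ j, Real.log ((σ i j)^2)
        + (1/(d:ℝ)) * Real.log ((M i)ᵀ * M i).det
      ≤ Real.log (∑ j,
        ‖(WithLp.equiv 2 (Fin n → ℝ)).symm (fun r => (M i * (V i)ᵀ) r j)‖ ^ 2 *
          (σ i j) ^ 2) := by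
    intro i
    set A := M i * (V i)ᵀ with hA
    set B := Aᵀ * A with hB
    have hBpsd : B.PosSemidef := by
      have := Matrix.posSemidef_conjTranspose_mul_self A
      rwa [Matrix.conjTranspose_eq_transpose_of_trivial] at this
    have hMpsd : ((M i)ᵀ * M i).PosSemidef := by
      have := Matrix.posSemidef_conjTranspose_mul_self (M i)
      rwa [Matrix.conjTranspose_eq_transpose_of_trivial] at this
    have hMrank : ((M i)ᵀ * M i).rank = d := by
      rw [Matrix.rank_transpose_mul_self, hrank i]
    have hdetMpos : 0 < ((M i)ᵀ * M i).det := my_det_pos hMpsd hMrank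
    have hVV : (V i).det * (V i).det = 1 := by
      have h := congrArg Matrix.det (hV i)
      rwa [Matrix.det_mul, Matrix.det_transpose, Matrix.det_one] at h
    have hdetB : B.det = ((M i)ᵀ * M i).det := by
      have hB_eq : B = V i * ((M i)ᵀ * M i) * (V i)ᵀ := by
        rw [hB, hA, Matrix.transpose_mul, Matrix.transpose_transpose]
        simp [Matrix.mul_assoc]
      rw [hB_eq, Matrix.det_mul, Matrix.det_mul, Matrix.det_transpose]
      linear_combination ((M i)ᵀ * M i).det * hVV
    have hdetBpos : 0 < B.det := hdetB ▸ hdetMpos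
    have hBjj : ∀ j, B j j = ∑ r, (A r j)^2 := by
      intro j; simp [hB, Matrix.mul_apply, Matrix.transpose_apply, pow_two]
    have hdiag : ∀ j, 0 < B j j := by
      intro j
      rcases (Finset.sum_nonneg fun r (_ : r ∈ Finset.univ) => sq_nonneg (A r j)).lt_or_eq
        with h | h
      · rw [hBjj j]; exact h
      · exfalso
        have hcol : ∀ r, A r j = 0 := by
          intro r
          have h0 := (Finset.sum_eq_zero_iff_of_nonneg
            (fun r (_ : r ∈ Finset.univ) => sq_nonneg (A r j))).1 h.symm r (Finset.mem_univ r)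
          exact pow_eq_zero_iff two_ne_zero |>.1 h0
        have hz : B.det = 0 := Matrix.det_eq_zero_of_column_eq_zero j (fun k => by
          simp [hB, Matrix.mul_apply, Matrix.transpose_apply, hcol])
        exact hdetBpos.ne' hz
    have hnorm : ∀ j, ‖(WithLp.equiv 2 (Fin n → ℝ)).symm (fun r => A r j)‖ ^ 2 = B j j := by
      intro j
      rw [EuclideanSpace.norm_eq,
        Real.sq_sqrt (Finset.sum_nonneg fun r _ => sq_nonneg _), hBjj j]
      simp [WithLp.equiv_symm_apply, Real.norm_eq_abs, sq_abs]
    have hxpos : ∀ j, 0 < B j j * σ i j ^ 2 :=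
      fun j => mul_pos (hdiag j) (pow_pos (hσ i j) 2)
    have hkey := my_key hd (fun j => B j j * σ i j ^ 2) hxpos
    have hgoal_eq : (∑ j, ‖(WithLp.equiv 2 (Fin n → ℝ)).symm (fun r => A r j)‖ ^ 2
        * (σ i j) ^ 2) = ∑ j, B j j * σ i j ^ 2 :=
      Finset.sum_congr rfl fun j _ => by rw [hnorm j]
    rw [hgoal_eq]
    refine le_trans ?_ hkey
    have hlogs : ∑ j, Real.log (B j j * σ i j ^ 2)
        = ∑ j, Real.log (B j j) + ∑ j, Real.log (σ i j ^ 2) := by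
      rw [← Finset.sum_add_distrib]
      exact Finset.sum_congr rfl fun j _ =>
        Real.log_mul (hdiag j).ne' (pow_pos (hσ i j) 2).ne'
    have hhad : Real.log ((M i)ᵀ * M i).det ≤ ∑ j, Real.log (B j j) := by
      rw [← hdetB, ← Real.log_prod (fun j _ => (hdiag j).ne')]
      exact Real.log_le_log hdetBpos (my_hadamard hd hBpsd hdiag)
    have hmul := mul_le_mul_of_nonneg_left hhad (by positivity : (0:ℝ) ≤ 1/(d:ℝ))
    have hexp : (1/(d:ℝ)) * (∑ j, Real.log (B j j) + ∑ j, Real.log (σ i j ^ 2))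
        = (1/(d:ℝ)) * ∑ j, Real.log (B j j) + (1/(d:ℝ)) * ∑ j, Real.log (σ i j ^ 2) := by
      ring
    rw [hlogs, hexp]
    linarith
  have hσsum : ∑ i, ∑ j, Real.log ((σ i j)^2) = -C := by
    rw [← hC]
    simp
  have hsum := Finset.sum_le_sum (fun i (_ : i ∈ Finset.univ) => key i)
  have hL : (N : ℝ) * Real.log d - C / d +
        (1 / d : ℝ) * ∑ i, Real.log ((M i)ᵀ * M i).det
      = ∑ i, (Real.log d + (1/(d:ℝ)) * ∑ j, Real.log ((σ i j)^2)
        + (1/(d:ℝ)) * Real.log ((M i)ᵀ * M i).det) := by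
    rw [Finset.sum_add_distrib, Finset.sum_add_distrib, Finset.sum_const, Finset.card_univ,
      Fintype.card_fin, ← Finset.mul_sum, ← Finset.mul_sum, hσsum, nsmul_eq_mul]
    field_simp
    ring
  rw [hL]
  exact hsum
end

section
/- (Main theorem, characterization of global minima — part (b), equality condition.) In the setting of the global lower bound — n, d, N positive naturals with d ≤ n; matrices M_i of rank d; orthogonal V_i; σ_{ij} > 0 with Σ_{i,j} (−log σ_{ij}²) = C; c_{ij} the j-th column of M_i V_iᵀ — equality Σ_i log( Σ_j ‖c_{ij}‖² σ_{ij}² ) = N·log d − C/d + (1/d) Σ_i log det(M_iᵀ M_i) holds if and only if for every i the columns c_{i1}, …, c_{id} of M_i V_iᵀ are pairwise orthogonal and the quantities ‖c_{ij}‖² σ_{ij}² are equal for all j ∈ {1, …, d}. In particular, at every global minimum of the constrained problem, every matrix M_i V_iᵀ has pairwise orthogonal columns. -/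
open Matrix
open Finset
open scoped RealInnerProductSpace

theorem amgm_log (d : ℕ) (hd : 0 < d) (μ : Fin d → ℝ) (hμ : ∀ j, 0 < μ j) :
    (Real.log d + (1/d) * ∑ j, Real.log (μ j) ≤ Real.log (∑ j, μ j)) ∧
    (Real.log (∑ j, μ j) = Real.log d + (1/d) * ∑ j, Real.log (μ j) ↔ ∀ j k, μ j = μ k) := by
  have hd' : (0:ℝ) < d := Nat.cast_pos.mpr hd
  have hw : ∑ _j : Fin d, (1/d : ℝ) = 1 := by
    rw [Finset.sum_const]
    simp
    field_simp
  have hne : (Finset.univ : Finset (Fin d)).Nonempty := by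
    simp [Finset.univ_nonempty_iff, ← Fin.pos_iff_nonempty, hd]
  have hsum : 0 < ∑ j, μ j := Finset.sum_pos (fun j _ => hμ j) hne
  have hmem : ∀ j ∈ (Finset.univ : Finset (Fin d)), μ j ∈ Set.Ioi (0:ℝ) := fun j _ => hμ j
  have hL : Real.log (∑ j : Fin d, (1/d : ℝ) • μ j) = Real.log (∑ j, μ j) - Real.log d := by
    simp only [smul_eq_mul]
    rw [← Finset.mul_sum, Real.log_mul (by positivity) (ne_of_gt hsum), Real.log_div one_ne_zero (ne_of_gt hd'), Real.log_one]
    ring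
  have hR : (∑ j : Fin d, (1/d : ℝ) • Real.log (μ j)) = (1/d) * ∑ j, Real.log (μ j) := by
    simp only [smul_eq_mul]
    rw [← Finset.mul_sum]
  constructor
  · have := (strictConcaveOn_log_Ioi.concaveOn).le_map_sum
      (fun j (_ : j ∈ (Finset.univ : Finset (Fin d))) => by positivity) hw hmem
    rw [hL, hR] at this
    linarith
  · have := strictConcaveOn_log_Ioi.map_sum_eq_iff
      (t := Finset.univ) (w := fun _ => (1/d:ℝ)) (p := μ)
      (fun j _ => by positivity) hw hmem
    rw [hL, hR] at this
    constructor
    · intro h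
      have h2 : ∀ j ∈ (Finset.univ : Finset (Fin d)), μ j = ∑ i, (1/d:ℝ) • μ i :=
        this.mp (by linarith)
      intro j k; rw [h2 j (Finset.mem_univ j), h2 k (Finset.mem_univ k)]
    · intro h
      have havg : ∀ j : Fin d, μ j = ∑ i, (1/d:ℝ) • μ i := by
        intro j
        have : (∑ i, (1/d:ℝ) • μ i) = ∑ _i : Fin d, (1/d:ℝ) • μ j := by
          exact Finset.sum_congr rfl fun i _ => by rw [h i j]
        rw [this, Finset.sum_const]
        simp
        field_simp
      have := this.mpr (fun j _ => havg j)
      linarith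

theorem spectral_key (d : ℕ) (hd : 0 < d) (H : Matrix (Fin d) (Fin d) ℝ)
    (hpsd : H.PosSemidef) (hrank : H.rank = d) :
    0 < H.det ∧ 0 < H.trace ∧
    (Real.log d + (1/d) * Real.log H.det ≤ Real.log H.trace) ∧
    (Real.log H.trace = Real.log d + (1/d) * Real.log H.det → ∃ c : ℝ, H = c • 1) := by
  have hherm : H.IsHermitian := hpsd.1
  set μ := hherm.eigenvalues with hμdef
  -- eigenvalues positive
  have hrank' : Fintype.card {i // μ i ≠ 0} = d := by
    rw [hherm.rank_eq_card_non_zero_eigs] at hrank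
    exact hrank
  have hμnz : ∀ j, μ j ≠ 0 := by
    intro j hj
    have hcard : Fintype.card {i // μ i ≠ 0} < d := by
      calc Fintype.card {i // μ i ≠ 0} < Fintype.card (Fin d) :=
          Fintype.card_subtype_lt (x := j) (by simp [hj])
        _ = d := Fintype.card_fin d
    omega
  have hμpos : ∀ j, 0 < μ j := fun j => lt_of_le_of_ne (hpsd.eigenvalues_nonneg j) (Ne.symm (hμnz j))
  -- det = prod eigenvalues
  have hdet : H.det = ∏ j, μ j := hherm.det_eq_prod_eigenvalues
  -- trace = sum eigenvalues
  have htr : H.trace = ∑ j, μ j := by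
    conv_lhs => rw [hherm.spectral_theorem]
    rw [Unitary.conjStarAlgAut_apply]
    rw [Matrix.trace_mul_cycle]
    rw [show (star (hherm.eigenvectorUnitary : Matrix (Fin d) (Fin d) ℝ)) *
        (hherm.eigenvectorUnitary : Matrix (Fin d) (Fin d) ℝ) = 1 from
      Matrix.mem_unitaryGroup_iff'.mp hherm.eigenvectorUnitary.2]
    rw [one_mul, Matrix.trace_diagonal]
    simp
    rfl
  have hdetpos : 0 < H.det := hdet ▸ Finset.prod_pos (fun j _ => hμpos j)
  have hne : (Finset.univ : Finset (Fin d)).Nonempty := by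
    simp [Finset.univ_nonempty_iff, ← Fin.pos_iff_nonempty, hd]
  have htrpos : 0 < H.trace := htr ▸ Finset.sum_pos (fun j _ => hμpos j) hne
  have hlogdet : Real.log H.det = ∑ j, Real.log (μ j) := by
    rw [hdet, Real.log_prod (fun j _ => ne_of_gt (hμpos j))]
  obtain ⟨h1, h2⟩ := amgm_log d hd μ hμpos
  refine ⟨hdetpos, htrpos, by rw [htr, hlogdet]; exact h1, ?_⟩
  intro heq
  rw [htr, hlogdet] at heq
  have hconst : ∀ j k, μ j = μ k := h2.mp heq
  -- H = c • 1 with c the common eigenvalue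
  have j0 : Fin d := ⟨0, hd⟩
  refine ⟨μ j0, ?_⟩
  have hfun : (RCLike.ofReal : ℝ → ℝ) ∘ μ = fun _ => μ j0 := by
    funext k
    simp [hconst k j0]
  have hdiag : Matrix.diagonal ((RCLike.ofReal : ℝ → ℝ) ∘ μ) = (μ j0) • (1 : Matrix (Fin d) (Fin d) ℝ) := by
    rw [hfun, smul_one_eq_diagonal]
  conv_lhs => rw [hherm.spectral_theorem]
  rw [hdiag]
  rw [Unitary.conjStarAlgAut_apply]
  rw [mul_smul_comm, smul_mul_assoc]
  rw [show (hherm.eigenvectorUnitary : Matrix (Fin d) (Fin d) ℝ) * 1 *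
      (star (hherm.eigenvectorUnitary : Matrix (Fin d) (Fin d) ℝ)) = 1 by
    rw [mul_one]; exact Matrix.mem_unitaryGroup_iff.mp hherm.eigenvectorUnitary.2]

theorem per_matrix (n d : ℕ) (hd : 0 < d)
    (M : Matrix (Fin n) (Fin d) ℝ) (hrank : M.rank = d)
    (V : Matrix (Fin d) (Fin d) ℝ) (hV : Vᵀ * V = 1)
    (σ : Fin d → ℝ) (hσ : ∀ j, 0 < σ j) :
    0 < (Mᵀ * M).det ∧
    (Real.log d + (1/d) * (Real.log (Mᵀ * M).det + ∑ j, Real.log (σ j ^ 2)) ≤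
      Real.log (∑ j, ‖(WithLp.equiv 2 (Fin n → ℝ)).symm (fun r => (M * Vᵀ) r j)‖ ^ 2 * σ j ^ 2)) ∧
    (Real.log (∑ j, ‖(WithLp.equiv 2 (Fin n → ℝ)).symm (fun r => (M * Vᵀ) r j)‖ ^ 2 * σ j ^ 2) =
        Real.log d + (1/d) * (Real.log (Mᵀ * M).det + ∑ j, Real.log (σ j ^ 2)) ↔
      ((∀ j k, j ≠ k →
        ⟪(WithLp.equiv 2 (Fin n → ℝ)).symm (fun r => (M * Vᵀ) r j),
          (WithLp.equiv 2 (Fin n → ℝ)).symm (fun r => (M * Vᵀ) r k)⟫ = 0) ∧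
      (∀ j k,
        ‖(WithLp.equiv 2 (Fin n → ℝ)).symm (fun r => (M * Vᵀ) r j)‖ ^ 2 * σ j ^ 2 =
        ‖(WithLp.equiv 2 (Fin n → ℝ)).symm (fun r => (M * Vᵀ) r k)‖ ^ 2 * σ k ^ 2))) := by
  classical
  set A : Matrix (Fin n) (Fin d) ℝ := M * Vᵀ with hA
  set B : Matrix (Fin n) (Fin d) ℝ := A * Matrix.diagonal σ with hB
  set H : Matrix (Fin d) (Fin d) ℝ := Bᵀ * B with hHdef
  set c : Fin d → EuclideanSpace ℝ (Fin n) :=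
    fun j => (WithLp.equiv 2 (Fin n → ℝ)).symm (fun r => A r j) with hc
  -- entries
  have hH : ∀ j k, H j k = (∑ r, A r j * A r k) * (σ j * σ k) := by
    intro j k
    rw [hHdef, Matrix.mul_apply]
    rw [Finset.sum_mul]
    refine Finset.sum_congr rfl fun r _ => ?_
    rw [Matrix.transpose_apply, hB, Matrix.mul_diagonal, Matrix.mul_diagonal]
    ring
  have hinner : ∀ j k, ⟪c j, c k⟫ = ∑ r, A r j * A r k := by
    intro j k
    rw [hc]
    simp [PiLp.inner_apply, RCLike.inner_apply]
    exact Finset.sum_congr rfl fun r _ => mul_comm _ _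
  have hnorm : ∀ j, ‖c j‖ ^ 2 = ∑ r, A r j * A r j := by
    intro j
    rw [← real_inner_self_eq_norm_sq, hinner]
  -- positive semidefinite
  have hpsd : H.PosSemidef := by
    rw [hHdef, ← Matrix.conjTranspose_eq_transpose_of_trivial]
    exact Matrix.posSemidef_conjTranspose_mul_self B
  -- rank
  have hdetV : Vᵀ.det * V.det = 1 := by
    rw [← Matrix.det_mul, hV, Matrix.det_one]
  have hrankH : H.rank = d := by
    rw [hHdef, ← Matrix.conjTranspose_eq_transpose_of_trivial,
      Matrix.rank_conjTranspose_mul_self]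
    have hBeq : B = M * (Vᵀ * Matrix.diagonal σ) := by rw [hB, hA, Matrix.mul_assoc]
    rw [hBeq, Matrix.rank_mul_eq_left_of_isUnit_det _ _ ?_]
    · exact hrank
    · rw [Matrix.det_mul, Matrix.det_diagonal]
      refine isUnit_iff_ne_zero.mpr (mul_ne_zero ?_ ?_)
      · intro h0; rw [h0, zero_mul] at hdetV; exact zero_ne_one hdetV
      · exact ne_of_gt (Finset.prod_pos fun j _ => hσ j)
  -- determinant
  have hdetH : H.det = (Mᵀ * M).det * ∏ j, σ j ^ 2 := by
    have hAtA : Aᵀ * A = V * (Mᵀ * M) * Vᵀ := by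
      rw [hA, Matrix.transpose_mul, Matrix.transpose_transpose]
      simp only [Matrix.mul_assoc]
    have : H = Matrix.diagonal σ * (Aᵀ * A) * Matrix.diagonal σ := by
      rw [hHdef, hB, Matrix.transpose_mul, Matrix.diagonal_transpose]
      simp only [Matrix.mul_assoc]
    rw [this, hAtA]
    simp only [Matrix.det_mul, Matrix.det_diagonal, Matrix.det_transpose]
    have : ∏ j, σ j ^ 2 = (∏ j, σ j) * ∏ j, σ j := by
      rw [← Finset.prod_mul_distrib]; exact Finset.prod_congr rfl fun j _ => sq (σ j)
    rw [this]
    have hVV : V.det * V.det = 1 := by rw [← hdetV, Matrix.det_transpose]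
    linear_combination ((∏ j, σ j) * (∏ j, σ j) * (Mᵀ * M).det) * hVV
  -- trace
  have htrH : H.trace = ∑ j, ‖c j‖ ^ 2 * σ j ^ 2 := by
    rw [Matrix.trace]
    refine Finset.sum_congr rfl fun j _ => ?_
    rw [Matrix.diag_apply, hH, hnorm]
    ring
  obtain ⟨hdetpos, htrpos, hineq, heqcase⟩ := spectral_key d hd H hpsd hrankH
  have hprodpos : 0 < ∏ j, σ j ^ 2 := Finset.prod_pos fun j _ => pow_pos (hσ j) 2
  have hMdetpos : 0 < (Mᵀ * M).det := by
    rw [hdetH] at hdetpos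
    by_contra h0
    push_neg at h0
    nlinarith
  have hlogdet : Real.log H.det = Real.log (Mᵀ * M).det + ∑ j, Real.log (σ j ^ 2) := by
    rw [hdetH, Real.log_mul (ne_of_gt hMdetpos) (ne_of_gt hprodpos),
      Real.log_prod fun j _ => ne_of_gt (pow_pos (hσ j) 2)]
  refine ⟨hMdetpos, ?_, ?_⟩
  · rw [← hlogdet, ← htrH]; exact hineq
  constructor
  · intro heq
    obtain ⟨c0, hc0⟩ := heqcase (by rw [htrH, hlogdet]; exact heq)
    have hcdiag : ∀ j k, H j k = if j = k then c0 else 0 := by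
      intro j k
      rw [hc0]
      by_cases h : j = k
      · simp [h, Matrix.one_apply]
      · simp [h, Matrix.one_apply]
    constructor
    · intro j k hjk
      have := hcdiag j k
      rw [hH, if_neg hjk] at this
      have hσjk : σ j * σ k ≠ 0 := mul_ne_zero (ne_of_gt (hσ j)) (ne_of_gt (hσ k))
      have : (∑ r, A r j * A r k) = 0 := by
        rcases mul_eq_zero.mp this with h | h
        · exact h
        · exact absurd h hσjk
      rw [hinner]; exact this
    · intro j k
      have hj := hcdiag j j
      have hk := hcdiag k k
      rw [hH, if_pos rfl] at hj hk
      have hj' : ‖c j‖ ^ 2 * σ j ^ 2 = c0 := by rw [hnorm]; rw [← hj]; ring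
      have hk' : ‖c k‖ ^ 2 * σ k ^ 2 = c0 := by rw [hnorm]; rw [← hk]; ring
      rw [hj', hk']
  · rintro ⟨horth, hequal⟩
    have j0 : Fin d := ⟨0, hd⟩
    set t0 : ℝ := ‖c j0‖ ^ 2 * σ j0 ^ 2 with ht0
    have hHc : H = t0 • 1 := by
      ext j k
      by_cases h : j = k
      · subst h
        rw [hH]
        have : (∑ r, A r j * A r j) * (σ j * σ j) = ‖c j‖ ^ 2 * σ j ^ 2 := by
          rw [hnorm]; ring
        rw [this, hequal j j0]
        simp [Matrix.one_apply, ht0]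
        exact Or.inl rfl
      · rw [hH]
        have hz : (∑ r, A r j * A r k) = 0 := by rw [← hinner]; exact horth j k h
        rw [hz, zero_mul]
        simp [Matrix.one_apply, h]
    have htrace : H.trace = d * t0 := by
      rw [hHc, Matrix.trace_smul, Matrix.trace_one]
      simp [mul_comm]
    have hdet : H.det = t0 ^ d := by
      rw [hHc, Matrix.det_smul, Matrix.det_one, Fintype.card_fin, mul_one]
    have ht0pos : 0 < t0 := by
      have h1 : 0 ≤ t0 := by positivity
      rcases lt_or_eq_of_le h1 with h | h
      · exact h
      · exfalso
        rw [hdet, ← h, zero_pow (by omega : d ≠ 0)] at hdetpos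
        exact lt_irrefl 0 hdetpos
    rw [← htrH, ← hlogdet, htrace, hdet, Real.log_mul (ne_of_gt (Nat.cast_pos.mpr hd : (0:ℝ) < d)) (ne_of_gt ht0pos),
      Real.log_pow]
    have hdR : (d : ℝ) ≠ 0 := ne_of_gt (Nat.cast_pos.mpr hd)
    field_simp

/-- **Main theorem, part (b): characterization of the global minima.** In the setting of the
global lower bound, equality
`∑_i log (∑_j ‖c_{ij}‖² σ_{ij}²) = N log d − C/d + (1/d) ∑_i log det (M_iᵀ M_i)`
holds if and only if for every `i` the columns of `M_i V_iᵀ` are pairwise orthogonal and the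
quantities `‖c_{ij}‖² σ_{ij}²` are equal for all `j`. In particular, at every global minimum
every `M_i V_iᵀ` has pairwise orthogonal columns. -/
theorem vae_global_lower_bound_equality_iff
    (n d N : ℕ) (hn : 0 < n) (hd : 0 < d) (hN : 0 < N) (hdn : d ≤ n)
    (M : Fin N → Matrix (Fin n) (Fin d) ℝ) (hrank : ∀ i, (M i).rank = d)
    (V : Fin N → Matrix (Fin d) (Fin d) ℝ) (hV : ∀ i, (V i)ᵀ * V i = 1)
    (σ : Fin N → Fin d → ℝ) (hσ : ∀ i j, 0 < σ i j)
    (C : ℝ) (hC : (∑ i, ∑ j, (-Real.log ((σ i j) ^ 2))) = C) :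
    (∑ i, Real.log (∑ j,
        ‖(WithLp.equiv 2 (Fin n → ℝ)).symm (fun r => (M i * (V i)ᵀ) r j)‖ ^ 2 *
          (σ i j) ^ 2)) =
      (N : ℝ) * Real.log d - C / d +
        (1 / d : ℝ) * ∑ i, Real.log ((M i)ᵀ * M i).det ↔
    ∀ i,
      (∀ j k, j ≠ k →
        ⟪(WithLp.equiv 2 (Fin n → ℝ)).symm (fun r => (M i * (V i)ᵀ) r j),
          (WithLp.equiv 2 (Fin n → ℝ)).symm (fun r => (M i * (V i)ᵀ) r k)⟫ = 0) ∧
      (∀ j k,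
        ‖(WithLp.equiv 2 (Fin n → ℝ)).symm (fun r => (M i * (V i)ᵀ) r j)‖ ^ 2 * (σ i j) ^ 2 =
        ‖(WithLp.equiv 2 (Fin n → ℝ)).symm (fun r => (M i * (V i)ᵀ) r k)‖ ^ 2 *
          (σ i k) ^ 2) := by
  have hpm := fun i => per_matrix n d hd (M i) (hrank i) (V i) (hV i) (σ i) (hσ i)
  set L : Fin N → ℝ := fun i => Real.log (∑ j,
      ‖(WithLp.equiv 2 (Fin n → ℝ)).symm (fun r => (M i * (V i)ᵀ) r j)‖ ^ 2 * (σ i j) ^ 2)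
    with hL
  set R : Fin N → ℝ := fun i =>
      Real.log d + (1/d) * (Real.log ((M i)ᵀ * M i).det + ∑ j, Real.log (σ i j ^ 2)) with hR
  have hRHS : (N : ℝ) * Real.log d - C / d +
      (1 / d : ℝ) * ∑ i, Real.log ((M i)ᵀ * M i).det = ∑ i, R i := by
    have hsumR : ∑ i, R i = (N : ℝ) * Real.log d +
        (1/d) * ∑ i, Real.log ((M i)ᵀ * M i).det + (1/d) * ∑ i, ∑ j, Real.log (σ i j ^ 2) := by
      rw [hR, Finset.sum_add_distrib, Finset.sum_const, Finset.card_univ, Fintype.card_fin,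
        ← Finset.mul_sum, Finset.sum_add_distrib]
      push_cast
      ring
    rw [hsumR, ← hC]
    simp only [Finset.sum_neg_distrib]
    ring
  rw [hRHS, eq_comm, Finset.sum_eq_sum_iff_of_le (fun i _ => (hpm i).2.1)]
  constructor
  · intro h i
    exact (hpm i).2.2.mp ((h i (Finset.mem_univ i)).symm)
  · intro h i _
    exact ((hpm i).2.2.mpr (h i)).symm
end

section
/- (Locally improving Hadamard's inequality.) Let k ≥ 2 and let M = U Σ Vᵀ be a nonsingular real k×k matrix, where U and V are k×k orthogonal matrices and Σ is a diagonal matrix with positive diagonal entries. Suppose the column vectors c₁, …, c_k of M satisfy ∏_{i=1}^k ‖c_i‖ > |det M| (strict Hadamard inequality, i.e. the columns are not pairwise orthogonal). Then for every ε > 0 there exists an orthogonal matrix V' with ‖V' − V‖ < ε such that the column vectors c'₁, …, c'_k of M' = U Σ V'ᵀ satisfy ∏_{i=1}^k ‖c'_i‖ < ∏_{i=1}^k ‖c_i‖. -/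
open Matrix


set_option maxHeartbeats 1000000

lemma key_aux (a b c s co η : ℝ) (hs : 0 < s) (hc : 0 < co) (hc1 : co ≤ 1)
    (hsη : s < η) (hηle : η ≤ 1/2) (h1 : s^2 + co^2 = 1)
    (hηB : η * (4*(|(c-a)^2/4 - b^2| + 1)) ≤ -(b*(c-a))) :
    (a*co^2 + 2*b*s*co + c*s^2) * (a*s^2 - 2*b*s*co + c*co^2) < a*c := by
  set A := (c-a)^2/4 - b^2 with hA
  set B := b*(c-a) with hB
  have hη0 : 0 < η := lt_trans hs hsη
  have hid : (a*co^2 + 2*b*s*co + c*s^2) * (a*s^2 - 2*b*s*co + c*co^2)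
      = a*c + 2*(s*co)*(2*(s*co)*A + B*(co^2 - s^2)) := by
    rw [hA, hB]; linear_combination (a*c*(1 + s^2 + co^2)) * h1
  rw [hid]
  have hsco : 0 < s*co := mul_pos hs hc
  have hscoη : s*co < η := by nlinarith
  have hd : 1/2 ≤ co^2 - s^2 := by nlinarith
  have hBneg : B < 0 := by
    have h0 : 0 < η * (4*(|A|+1)) := by positivity
    linarith
  have h2 : 2*(s*co)*A ≤ 2*η*|A| := by
    rcases le_or_gt 0 A with hA0 | hA0
    · have h5 : (s*co)*A ≤ η*A := mul_le_mul_of_nonneg_right (le_of_lt hscoη) hA0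
      rw [abs_of_nonneg hA0]; linarith
    · have h5 : 2*(s*co)*A ≤ 0 := by nlinarith
      have h6 : 0 ≤ 2*η*|A| := by positivity
      linarith
  have h3 : B*(co^2 - s^2) ≤ B/2 := by nlinarith
  have h4 : 2*η*|A| < -B/2 := by linarith
  have hinner : 2*(s*co)*A + B*(co^2 - s^2) < 0 := by linarith
  nlinarith [mul_neg_of_pos_of_neg hsco hinner]

lemma key_trig (a b c δ : ℝ) (hb : b ≠ 0) (hδ : 0 < δ) :
    ∃ θ : ℝ, |θ| < δ ∧
      (a * Real.cos θ ^ 2 + 2*b*Real.sin θ*Real.cos θ + c * Real.sin θ ^ 2) *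
      (a * Real.sin θ ^ 2 - 2*b*Real.sin θ*Real.cos θ + c * Real.cos θ ^ 2) < a * c := by
  set B := b * (c - a) with hB
  by_cases hB0 : B = 0
  · -- then c = a
    have hca : c = a := by
      rcases mul_eq_zero.mp hB0 with h | h
      · exact absurd h hb
      · linarith
    refine ⟨min (δ/2) (1/2), ?_, ?_⟩
    · rw [abs_of_pos (by positivity)]
      calc min (δ/2) (1/2) ≤ δ/2 := min_le_left _ _
        _ < δ := by linarith
    · set θ := min (δ/2) (1/2) with hθ
      have hθpos : 0 < θ := by positivity
      have hθle : θ ≤ 1/2 := min_le_right _ _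
      have hs : 0 < Real.sin θ := Real.sin_pos_of_pos_of_lt_pi hθpos (by nlinarith [Real.pi_gt_three])
      have hc : 0 < Real.cos θ := Real.cos_pos_of_mem_Ioo ⟨by nlinarith [Real.pi_gt_three], by nlinarith [Real.pi_gt_three]⟩
      have h1 : Real.sin θ ^ 2 + Real.cos θ ^ 2 = 1 := Real.sin_sq_add_cos_sq θ
      rw [hca]
      have hid : (a * Real.cos θ ^ 2 + 2*b*Real.sin θ*Real.cos θ + a * Real.sin θ ^ 2) *
          (a * Real.sin θ ^ 2 - 2*b*Real.sin θ*Real.cos θ + a * Real.cos θ ^ 2)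
          = a*a - 4*b^2*(Real.sin θ*Real.cos θ)^2 := by
        linear_combination (a*a*(1 + Real.sin θ^2 + Real.cos θ^2)) * h1
      rw [hid]
      have : 0 < 4*b^2*(Real.sin θ*Real.cos θ)^2 := by positivity
      linarith
  · set A := (c-a)^2/4 - b^2 with hA
    set η := min (min (δ/2) (1/2)) (|B| / (4*(|A|+1))) with hη
    have hBpos' : 0 < |B| := abs_pos.mpr hB0
    have hηpos : 0 < η := by
      have h2 : 0 < |B| / (4*(|A|+1)) := by positivity
      simp only [hη, lt_min_iff]
      exact ⟨⟨by linarith, by norm_num⟩, h2⟩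
    have hηle : η ≤ 1/2 := le_trans (min_le_left _ _) (min_le_right _ _)
    have hηδ : η < δ := lt_of_le_of_lt (le_trans (min_le_left _ _) (min_le_left _ _)) (by linarith)
    have hηB : η * (4*(|A|+1)) ≤ |B| := by
      have h := min_le_right (min (δ/2) (1/2)) (|B| / (4*(|A|+1)))
      rw [le_div_iff₀ (by positivity)] at h
      exact h
    have hs : 0 < Real.sin η := Real.sin_pos_of_pos_of_lt_pi hηpos (by nlinarith [Real.pi_gt_three])
    have hc : 0 < Real.cos η := Real.cos_pos_of_mem_Ioo ⟨by nlinarith [Real.pi_gt_three], by nlinarith [Real.pi_gt_three]⟩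
    have hc1 : Real.cos η ≤ 1 := Real.cos_le_one η
    have hsη : Real.sin η < η := Real.sin_lt hηpos
    have h1 : Real.sin η ^ 2 + Real.cos η ^ 2 = 1 := Real.sin_sq_add_cos_sq η
    rcases lt_or_ge B 0 with hBneg | hBpos
    · -- use θ = η
      refine ⟨η, by rwa [abs_of_pos hηpos], ?_⟩
      have haux := key_aux a b c (Real.sin η) (Real.cos η) η hs hc hc1 hsη hηle h1 ?_
      · linarith [haux]
      · rw [abs_of_neg hBneg] at hηB; rw [← hA, ← hB]; linarith
    · -- B > 0, use θ = -η with b ↦ -b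
      have hBpos : 0 < B := lt_of_le_of_ne hBpos (Ne.symm hB0)
      refine ⟨-η, by rwa [abs_neg, abs_of_pos hηpos], ?_⟩
      have haux := key_aux a (-b) c (Real.sin η) (Real.cos η) η hs hc hc1 hsη hηle h1 ?_
      · rw [Real.sin_neg, Real.cos_neg]
        calc (a * Real.cos η ^ 2 + 2*b*(-Real.sin η)*Real.cos η + c * (-Real.sin η) ^ 2) *
            (a * (-Real.sin η) ^ 2 - 2*b*(-Real.sin η)*Real.cos η + c * Real.cos η ^ 2)
            = (a*Real.cos η^2 + 2*(-b)*Real.sin η*Real.cos η + c*Real.sin η^2) *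
              (a*Real.sin η^2 - 2*(-b)*Real.sin η*Real.cos η + c*Real.cos η^2) := by ring
          _ < a*c := haux
      · have e1 : |(c-a)^2/4 - (-b)^2| = |A| := by rw [hA]; ring_nf
        have e2 : -(-b*(c-a)) = B := by rw [hB]; ring
        rw [e1, e2, ← abs_of_pos hBpos]
        exact hηB



lemma hadamard_col_entry' {k : ℕ} (U S W : Matrix (Fin k) (Fin k) ℝ)
    (hSdiag : ∀ i j, i ≠ j → S i j = 0) (r l : Fin k) :
    (U * S * Wᵀ) r l = ∑ p, U r p * (S p p * W l p) := by
  rw [Matrix.mul_apply]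
  refine Finset.sum_congr rfl fun p _ => ?_
  rw [Matrix.transpose_apply, Matrix.mul_apply]
  rw [Finset.sum_eq_single p (fun m _ hm => by rw [hSdiag m p hm, mul_zero]) (by simp)]
  ring

lemma hadamard_inner_cols' {k : ℕ} (U S W : Matrix (Fin k) (Fin k) ℝ)
    (hU : Uᵀ * U = 1) (hSdiag : ∀ i j, i ≠ j → S i j = 0) (i j : Fin k) :
    ∑ r, (U * S * Wᵀ) r i * (U * S * Wᵀ) r j
      = ∑ p, (S p p)^2 * (W i p * W j p) := by
  have hUo : ∀ p q : Fin k, (∑ r, U r p * U r q) = if p = q then 1 else 0 := by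
    intro p q
    have := congrFun (congrFun hU p) q
    simpa [Matrix.mul_apply, Matrix.one_apply, Matrix.transpose_apply] using this
  calc ∑ r, (U * S * Wᵀ) r i * (U * S * Wᵀ) r j
      = ∑ r, (∑ p, U r p * (S p p * W i p)) * (∑ q, U r q * (S q q * W j q)) := by
        refine Finset.sum_congr rfl fun r _ => ?_
        rw [hadamard_col_entry' U S W hSdiag, hadamard_col_entry' U S W hSdiag]
    _ = ∑ r, ∑ p, ∑ q, (U r p * (S p p * W i p)) * (U r q * (S q q * W j q)) := by
        refine Finset.sum_congr rfl fun r _ => ?_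
        rw [Finset.sum_mul_sum]
    _ = ∑ p, ∑ r, ∑ q, (U r p * (S p p * W i p)) * (U r q * (S q q * W j q)) :=
        Finset.sum_comm
    _ = ∑ p, ∑ q, ∑ r, (U r p * (S p p * W i p)) * (U r q * (S q q * W j q)) := by
        exact Finset.sum_congr rfl fun p _ => Finset.sum_comm
    _ = ∑ p, ∑ q, ((S p p * W i p) * (S q q * W j q)) * ∑ r, U r p * U r q := by
        refine Finset.sum_congr rfl fun p _ => Finset.sum_congr rfl fun q _ => ?_
        rw [Finset.mul_sum]
        exact Finset.sum_congr rfl fun r _ => by ring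
    _ = ∑ p, (S p p)^2 * (W i p * W j p) := by
        refine Finset.sum_congr rfl fun p _ => ?_
        simp only [hUo, mul_ite, mul_one, mul_zero]
        rw [Finset.sum_ite_eq Finset.univ p (fun q => (S p p * W i p) * (S q q * W j q))]
        simp only [Finset.mem_univ, if_true]
        ring

lemma hadamard_norm_eq' {k : ℕ} (f : Fin k → ℝ) :
    ‖(WithLp.equiv 2 (Fin k → ℝ)).symm f‖ = Real.sqrt (∑ r, (f r)^2) := by
  rw [show ((WithLp.equiv 2 (Fin k → ℝ)).symm f) = (WithLp.toLp 2 f : EuclideanSpace ℝ (Fin k)) from rfl,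
    EuclideanSpace.norm_eq]
  congr 1
  exact Finset.sum_congr rfl fun r _ => by simp [Real.norm_eq_abs, sq_abs]

lemma hadamard_colnorm {k : ℕ} (U S W : Matrix (Fin k) (Fin k) ℝ)
    (hU : Uᵀ * U = 1) (hSdiag : ∀ i j, i ≠ j → S i j = 0) (l : Fin k) :
    ‖(WithLp.equiv 2 (Fin k → ℝ)).symm (fun r => (U * S * Wᵀ) r l)‖
      = Real.sqrt (∑ p, (S p p)^2 * (W l p)^2) := by
  rw [hadamard_norm_eq']
  congr 1
  calc ∑ r, ((U * S * Wᵀ) r l)^2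
      = ∑ r, (U * S * Wᵀ) r l * (U * S * Wᵀ) r l := by
        exact Finset.sum_congr rfl fun r _ => by ring
    _ = ∑ p, (S p p)^2 * (W l p * W l p) := hadamard_inner_cols' U S W hU hSdiag l l
    _ = ∑ p, (S p p)^2 * (W l p)^2 := Finset.sum_congr rfl fun p _ => by ring

lemma hadamard_q_pos' {k : ℕ} (S W : Matrix (Fin k) (Fin k) ℝ)
    (hSpos : ∀ i, 0 < S i i) (hW : Wᵀ * W = 1) (l : Fin k) :
    0 < ∑ p, (S p p)^2 * (W l p)^2 := by
  have hWWt : W * Wᵀ = 1 := mul_eq_one_comm.mp hW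
  have hrow : ∑ p, (W l p)^2 = 1 := by
    have := congrFun (congrFun hWWt l) l
    simpa [Matrix.mul_apply, Matrix.one_apply, Matrix.transpose_apply, sq] using this
  refine Finset.sum_pos' (fun p _ => by positivity) ?_
  by_contra h
  push_neg at h
  have hz : ∀ p : Fin k, W l p = 0 := by
    intro p
    have h2 := h p (Finset.mem_univ p)
    have h3 : 0 ≤ (S p p)^2 * (W l p)^2 := by positivity
    have h4 : (S p p)^2 * (W l p)^2 = 0 := le_antisymm h2 h3
    have h5 := (hSpos p).ne'
    rcases mul_eq_zero.mp h4 with h6 | h6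
    · exact absurd (pow_eq_zero_iff (by norm_num) |>.mp h6) h5
    · exact pow_eq_zero_iff (by norm_num) |>.mp h6
  rw [Finset.sum_eq_zero (fun p _ => by rw [hz p]; ring)] at hrow
  norm_num at hrow

lemma hadamard_exists_pair {k : ℕ}
    (U V S : Matrix (Fin k) (Fin k) ℝ)
    (hU : Uᵀ * U = 1) (hV : Vᵀ * V = 1)
    (hSdiag : ∀ i j, i ≠ j → S i j = 0) (hSpos : ∀ i, 0 < S i i)
    (hstrict : |(U * S * Vᵀ).det| <
      ∏ i, ‖(WithLp.equiv 2 (Fin k → ℝ)).symm (fun r => (U * S * Vᵀ) r i)‖) :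
    ∃ i j : Fin k, i ≠ j ∧ (∑ p, (S p p)^2 * (V i p * V j p)) ≠ 0 := by
  by_contra h
  push_neg at h
  set q : Fin k → ℝ := fun l => ∑ p, (S p p)^2 * (V l p)^2 with hq
  have hNtN : (U * S * Vᵀ)ᵀ * (U * S * Vᵀ) = Matrix.diagonal q := by
    ext a b
    rw [Matrix.mul_apply]
    have : ∑ r, (U * S * Vᵀ)ᵀ a r * (U * S * Vᵀ) r b
        = ∑ r, (U * S * Vᵀ) r a * (U * S * Vᵀ) r b :=
      Finset.sum_congr rfl fun r _ => by rw [Matrix.transpose_apply]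
    rw [this, hadamard_inner_cols' U S V hU hSdiag a b]
    by_cases hab : a = b
    · subst hab
      rw [Matrix.diagonal_apply_eq]
      exact Finset.sum_congr rfl fun p _ => by ring
    · rw [Matrix.diagonal_apply_ne _ hab]
      exact h a b hab
  have hdet2 : ((U * S * Vᵀ).det)^2 = ∏ l, q l := by
    have h1 : ((U * S * Vᵀ)ᵀ * (U * S * Vᵀ)).det = (U * S * Vᵀ).det * (U * S * Vᵀ).det := by
      rw [Matrix.det_mul, Matrix.det_transpose]
    rw [hNtN, Matrix.det_diagonal] at h1
    rw [sq, h1]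
  have hqnn : ∀ l, 0 ≤ q l := fun l => Finset.sum_nonneg fun p _ => by positivity
  have hprodsq : (∏ l, Real.sqrt (q l))^2 = ∏ l, q l := by
    rw [← Finset.prod_pow]
    exact Finset.prod_congr rfl fun l _ => Real.sq_sqrt (hqnn l)
  have hnorm : ∀ l, ‖(WithLp.equiv 2 (Fin k → ℝ)).symm (fun r => (U * S * Vᵀ) r l)‖
      = Real.sqrt (q l) := fun l => hadamard_colnorm U S V hU hSdiag l
  have hprodeq : ∏ l, Real.sqrt (q l) = |(U * S * Vᵀ).det| := by
    calc ∏ l, Real.sqrt (q l)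
        = Real.sqrt ((∏ l, Real.sqrt (q l))^2) :=
          (Real.sqrt_sq (Finset.prod_nonneg fun l _ => Real.sqrt_nonneg _)).symm
      _ = Real.sqrt (((U * S * Vᵀ).det)^2) := by rw [hprodsq, hdet2]
      _ = |(U * S * Vᵀ).det| := Real.sqrt_sq_eq_abs _
  rw [Finset.prod_congr rfl (fun l _ => hnorm l), hprodeq] at hstrict
  exact lt_irrefl _ hstrict

/-- **Locally improving Hadamard's inequality.** Let `k ≥ 2` and `M = U Σ Vᵀ` be a
nonsingular real `k × k` matrix with `U, V` orthogonal and `Σ` diagonal with positive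
diagonal entries. If the columns `c_i` of `M` satisfy the strict Hadamard inequality
`∏_i ‖c_i‖ > |det M|`, then for every `ε > 0` there is an orthogonal `V'` with
`‖V' − V‖_F < ε` such that the columns `c'_i` of `M' = U Σ V'ᵀ` satisfy
`∏_i ‖c'_i‖ < ∏_i ‖c_i‖`. -/
theorem locally_improving_hadamard
    (k : ℕ) (hk : 2 ≤ k)
    (U V S : Matrix (Fin k) (Fin k) ℝ)
    (hU : Uᵀ * U = 1) (hV : Vᵀ * V = 1)
    (hSdiag : ∀ i j, i ≠ j → S i j = 0) (hSpos : ∀ i, 0 < S i i)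
    (hstrict : |(U * S * Vᵀ).det| <
      ∏ i, ‖(WithLp.equiv 2 (Fin k → ℝ)).symm (fun r => (U * S * Vᵀ) r i)‖) :
    ∀ ε > (0 : ℝ), ∃ V' : Matrix (Fin k) (Fin k) ℝ,
      V'ᵀ * V' = 1 ∧
      Real.sqrt (∑ r, ∑ c, (V' r c - V r c) ^ 2) < ε ∧
      (∏ i, ‖(WithLp.equiv 2 (Fin k → ℝ)).symm (fun r => (U * S * V'ᵀ) r i)‖) <
        ∏ i, ‖(WithLp.equiv 2 (Fin k → ℝ)).symm (fun r => (U * S * Vᵀ) r i)‖ := by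
  intro ε hε
  obtain ⟨i, j, hij, hb⟩ := hadamard_exists_pair U V S hU hV hSdiag hSpos hstrict
  set aa := ∑ p, (S p p)^2 * (V i p)^2 with haa
  set cc := ∑ p, (S p p)^2 * (V j p)^2 with hcc
  set bb := ∑ p, (S p p)^2 * (V i p * V j p) with hbb
  obtain ⟨θ, hθ, hlt⟩ := key_trig aa bb cc (ε/2) hb (by linarith)
  set co := Real.cos θ with hco
  set s := Real.sin θ with hs
  have h1trig : s^2 + co^2 = 1 := Real.sin_sq_add_cos_sq θ
  set V' : Matrix (Fin k) (Fin k) ℝ :=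
    fun p q => if p = i then co * V i q + s * V j q
      else if p = j then -s * V i q + co * V j q else V p q with hV'def
  have hV'i : ∀ q, V' i q = co * V i q + s * V j q := by
    intro q; simp [hV'def]
  have hV'j : ∀ q, V' j q = -s * V i q + co * V j q := by
    intro q; simp [hV'def, Ne.symm hij]
  have hV'other : ∀ p, p ≠ i → p ≠ j → ∀ q, V' p q = V p q := by
    intro p h1 h2 q; simp [hV'def, h1, h2]
  have hVVt : V * Vᵀ = 1 := mul_eq_one_comm.mp hV
  have hRab : ∀ x y : Fin k, (∑ p, V x p * V y p) = if x = y then 1 else 0 := by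
    intro x y
    have := congrFun (congrFun hVVt x) y
    simpa [Matrix.mul_apply, Matrix.one_apply, Matrix.transpose_apply] using this
  -- orthogonality of V'
  have hV'orth : V'ᵀ * V' = 1 := by
    have heq : V'ᵀ * V' = Vᵀ * V := by
      ext x y
      rw [Matrix.mul_apply, Matrix.mul_apply]
      simp only [Matrix.transpose_apply]
      have hdiff : ∑ p, (V' p x * V' p y - V p x * V p y) = 0 := by
        rw [← Finset.sum_subset (Finset.subset_univ ({i, j} : Finset (Fin k)))
          (fun p _ hp => by
            have h1 : p ≠ i := fun h => hp (by simp [h])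
            have h2 : p ≠ j := fun h => hp (by simp [h])
            rw [hV'other p h1 h2, hV'other p h1 h2, sub_self])]
        rw [Finset.sum_pair hij]
        rw [hV'i, hV'i, hV'j, hV'j]
        linear_combination (V i x * V i y + V j x * V j y) * h1trig
      have h2 : ∑ p, V' p x * V' p y - ∑ p, V p x * V p y = 0 := by
        rw [← Finset.sum_sub_distrib]; exact hdiff
      linarith
    rw [heq, hV]
  refine ⟨V', hV'orth, ?_, ?_⟩
  · -- Frobenius bound
    have hrowi : ∑ q, (V' i q - V i q)^2 = 2 - 2*co := by
      calc ∑ q, (V' i q - V i q)^2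
          = ∑ q, ((co-1)^2*(V i q * V i q) + (2*(co-1)*s)*(V i q * V j q)
              + s^2*(V j q * V j q)) :=
            Finset.sum_congr rfl fun q _ => by rw [hV'i]; ring
        _ = (co-1)^2*(∑ q, V i q * V i q) + (2*(co-1)*s)*(∑ q, V i q * V j q)
              + s^2*(∑ q, V j q * V j q) := by
            rw [Finset.sum_add_distrib, Finset.sum_add_distrib,
              Finset.mul_sum, Finset.mul_sum, Finset.mul_sum]
        _ = 2 - 2*co := by
            rw [hRab i i, hRab i j, hRab j j]
            simp [hij]
            linear_combination h1trig
    have hrowj : ∑ q, (V' j q - V j q)^2 = 2 - 2*co := by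
      calc ∑ q, (V' j q - V j q)^2
          = ∑ q, (s^2*(V i q * V i q) + (-2*(co-1)*s)*(V i q * V j q)
              + (co-1)^2*(V j q * V j q)) :=
            Finset.sum_congr rfl fun q _ => by rw [hV'j]; ring
        _ = s^2*(∑ q, V i q * V i q) + (-2*(co-1)*s)*(∑ q, V i q * V j q)
              + (co-1)^2*(∑ q, V j q * V j q) := by
            rw [Finset.sum_add_distrib, Finset.sum_add_distrib,
              Finset.mul_sum, Finset.mul_sum, Finset.mul_sum]
        _ = 2 - 2*co := by
            rw [hRab i i, hRab i j, hRab j j]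
            simp [hij]
            linear_combination h1trig
    have hFrob : ∑ r, ∑ q, (V' r q - V r q)^2 = (2 - 2*co) + (2 - 2*co) := by
      rw [← Finset.sum_subset (Finset.subset_univ ({i, j} : Finset (Fin k)))
        (fun r _ hr => by
          have h1 : r ≠ i := fun h => hr (by simp [h])
          have h2 : r ≠ j := fun h => hr (by simp [h])
          exact Finset.sum_eq_zero fun q _ => by
            rw [hV'other r h1 h2, sub_self]; ring)]
      rw [Finset.sum_pair hij, hrowi, hrowj]
    have hcosb : 1 - θ^2/2 ≤ co := Real.one_sub_sq_div_two_le_cos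
    have hθsq : θ^2 < ε^2/4 := by nlinarith [abs_nonneg θ, sq_abs θ]
    have hF : ∑ r, ∑ q, (V' r q - V r q)^2 < ε^2 := by rw [hFrob]; nlinarith
    exact (Real.sqrt_lt' hε).mpr hF
  · -- product of column norms decreases
    rw [Finset.prod_congr rfl (fun l _ => hadamard_colnorm U S V' hU hSdiag l),
        Finset.prod_congr rfl (fun l _ => hadamard_colnorm U S V hU hSdiag l)]
    have hsplit : ∀ g : Fin k → ℝ,
        ∏ l, g l = (g i * g j) * ∏ l ∈ (Finset.univ.erase i).erase j, g l := by
      intro g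
      rw [← Finset.mul_prod_erase Finset.univ g (Finset.mem_univ i),
        ← Finset.mul_prod_erase (Finset.univ.erase i) g
          (Finset.mem_erase.mpr ⟨Ne.symm hij, Finset.mem_univ j⟩), mul_assoc]
    rw [hsplit, hsplit]
    have hT : (∏ l ∈ (Finset.univ.erase i).erase j, Real.sqrt (∑ p, (S p p)^2 * (V' l p)^2))
        = ∏ l ∈ (Finset.univ.erase i).erase j, Real.sqrt (∑ p, (S p p)^2 * (V l p)^2) := by
      refine Finset.prod_congr rfl fun l hl => ?_
      obtain ⟨hlj, hli, -⟩ : l ≠ j ∧ l ≠ i ∧ True := by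
        rcases Finset.mem_erase.mp hl with ⟨h1, h2⟩
        exact ⟨h1, (Finset.mem_erase.mp h2).1, trivial⟩
      congr 1
      exact Finset.sum_congr rfl fun p _ => by rw [hV'other l hli hlj]
    rw [hT]
    have hqpos : ∀ l, 0 < ∑ p, (S p p)^2 * (V l p)^2 := hadamard_q_pos' S V hSpos hV
    have hq'nn : ∀ l, 0 ≤ ∑ p, (S p p)^2 * (V' l p)^2 :=
      fun l => Finset.sum_nonneg fun p _ => by positivity
    have hq'i : (∑ p, (S p p)^2 * (V' i p)^2) = aa*co^2 + 2*bb*s*co + cc*s^2 := by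
      calc ∑ p, (S p p)^2 * (V' i p)^2
          = ∑ p, (co^2*((S p p)^2*(V i p)^2) + (2*s*co)*((S p p)^2*(V i p * V j p))
              + s^2*((S p p)^2*(V j p)^2)) :=
            Finset.sum_congr rfl fun p _ => by rw [hV'i]; ring
        _ = co^2*aa + (2*s*co)*bb + s^2*cc := by
            rw [Finset.sum_add_distrib, Finset.sum_add_distrib,
              ← Finset.mul_sum, ← Finset.mul_sum, ← Finset.mul_sum]
        _ = aa*co^2 + 2*bb*s*co + cc*s^2 := by ring
    have hq'j : (∑ p, (S p p)^2 * (V' j p)^2) = aa*s^2 - 2*bb*s*co + cc*co^2 := by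
      calc ∑ p, (S p p)^2 * (V' j p)^2
          = ∑ p, (s^2*((S p p)^2*(V i p)^2) + (-(2*s*co))*((S p p)^2*(V i p * V j p))
              + co^2*((S p p)^2*(V j p)^2)) :=
            Finset.sum_congr rfl fun p _ => by rw [hV'j]; ring
        _ = s^2*aa + (-(2*s*co))*bb + co^2*cc := by
            rw [Finset.sum_add_distrib, Finset.sum_add_distrib,
              ← Finset.mul_sum, ← Finset.mul_sum, ← Finset.mul_sum]
        _ = aa*s^2 - 2*bb*s*co + cc*co^2 := by ring
    have hmain : Real.sqrt (∑ p, (S p p)^2 * (V' i p)^2) * Real.sqrt (∑ p, (S p p)^2 * (V' j p)^2)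
        < Real.sqrt (∑ p, (S p p)^2 * (V i p)^2) * Real.sqrt (∑ p, (S p p)^2 * (V j p)^2) := by
      rw [← Real.sqrt_mul (hq'nn i), ← Real.sqrt_mul (le_of_lt (hqpos i))]
      apply Real.sqrt_lt_sqrt (mul_nonneg (hq'nn i) (hq'nn j))
      rw [hq'i, hq'j]
      calc (aa*co^2 + 2*bb*s*co + cc*s^2) * (aa*s^2 - 2*bb*s*co + cc*co^2)
          = (aa * co ^ 2 + 2*bb*s*co + cc * s ^ 2) *
            (aa * s ^ 2 - 2*bb*s*co + cc * co ^ 2) := by ring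
        _ < aa * cc := hlt
      -- goal remainder: aa * cc ≤ (∑ p ...) * (∑ p ...) ?
    have hTpos : 0 < ∏ l ∈ (Finset.univ.erase i).erase j,
        Real.sqrt (∑ p, (S p p)^2 * (V l p)^2) :=
      Finset.prod_pos fun l _ => Real.sqrt_pos.mpr (hqpos l)
    exact mul_lt_mul_of_pos_right hmain hTpos
end
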